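/- Let d ∈ ℕ, T ∈ ℝ and α ∈ ℝ^d, and define u_{T,α}(t,x) := √2 / (A₀(α)(T−t) − A_j(α) x^j). Then at every (t,x) ∈ ℝ^{1+d} with A₀(α)(T−t) − A_j(α) x^j ≠ 0, the function u_{T,α} satisfies the focusing cubic wave equation −∂_t² u(t,x) + Δ_x u(t,x) + u(t,x)³ = 0. -/

import Mathlib

noncomputable section

/-- `A₀(α) = cosh(α^d)···cosh(α¹)` -/
def A0 {d : ℕ} (α : Fin d → ℝ) : ℝ := ∏ k, Real.cosh (α k)

/-- `A_j(α) = cosh(α^d)···cosh(α^{j+1}) sinh(α^j)` -/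
def Ac {d : ℕ} (α : Fin d → ℝ) (j : Fin d) : ℝ :=
  (∏ k ∈ Finset.Ioi j, Real.cosh (α k)) * Real.sinh (α j)

/-- the partial derivative in the `i`-th coordinate direction -/
def pdR {d : ℕ} (i : Fin d) (f : EuclideanSpace ℝ (Fin d) → ℝ) :
    EuclideanSpace ℝ (Fin d) → ℝ :=
  fun x => fderiv ℝ f x (EuclideanSpace.single i 1)

/-- the ODE-blowup solution transported by a Lorentz boost:
`u_{T,α}(t,x) = √2 / (A₀(α)(T−t) − A_j(α)x^j)` -/
def uTA {d : ℕ} (T : ℝ) (α : Fin d → ℝ) (t : ℝ) (x : EuclideanSpace ℝ (Fin d)) : ℝ :=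
  Real.sqrt 2 / (A0 α * (T - t) - ∑ j, Ac α j * x j)

lemma key_id (d : ℕ) (α : Fin d → ℝ) : (A0 α)^2 - ∑ j, (Ac α j)^2 = 1 := by
  induction d with
  | zero => simp [A0]
  | succ n ih =>
    have h0 : Ac α 0 = A0 (α ∘ Fin.succ) * Real.sinh (α 0) := by
      rw [Ac, A0, Fin.prod_Ioi_zero]; rfl
    have hs : ∀ i : Fin n, Ac α i.succ = Ac (α ∘ Fin.succ) i := by
      intro i; rw [Ac, Ac, Fin.prod_Ioi_succ]; rfl
    have hA : A0 α = Real.cosh (α 0) * A0 (α ∘ Fin.succ) := by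
      rw [A0, A0, Fin.prod_univ_succ]; rfl
    rw [Fin.sum_univ_succ, hA, h0]
    simp only [hs]
    have := ih (α ∘ Fin.succ)
    have hc := Real.cosh_sq_sub_sinh_sq (α 0)
    nlinarith [this, hc]

lemma time_lemma (c S T t : ℝ) (h : c * (T - t) - S ≠ 0) :
    deriv (deriv fun s => Real.sqrt 2 / (c * (T - s) - S)) t
      = 2 * Real.sqrt 2 * c ^ 2 / (c * (T - t) - S) ^ 3 := by
  have hden : ∀ s : ℝ, HasDerivAt (fun s => c * (T - s) - S) (-c) s := by
    intro s
    have : HasDerivAt (fun s : ℝ => c * (T - s) - S) (c * (0 - 1) - 0) s :=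
      (((hasDerivAt_const s T).sub (hasDerivAt_id s)).const_mul c).sub (hasDerivAt_const s S)
    simpa using this
  have hder : ∀ s : ℝ, c * (T - s) - S ≠ 0 →
      deriv (fun s => Real.sqrt 2 / (c * (T - s) - S)) s
        = Real.sqrt 2 * c / (c * (T - s) - S) ^ 2 := by
    intro s hs
    have h1 : HasDerivAt (fun s => Real.sqrt 2 / (c * (T - s) - S))
        (Real.sqrt 2 * (-(-c) / (c * (T - s) - S) ^ 2)) s := by
      simpa [div_eq_mul_inv, mul_comm] using ((hden s).inv hs).const_mul (Real.sqrt 2)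
    rw [h1.deriv]; field_simp
  have hopen : ∀ᶠ s in nhds t, c * (T - s) - S ≠ 0 := by
    have hc : Continuous fun s : ℝ => c * (T - s) - S := by continuity
    exact hc.continuousAt.eventually_ne h
  have heq : (deriv fun s => Real.sqrt 2 / (c * (T - s) - S)) =ᶠ[nhds t]
      fun s => Real.sqrt 2 * c / (c * (T - s) - S) ^ 2 :=
    hopen.mono fun s hs => hder s hs
  rw [heq.deriv_eq]
  have hp : HasDerivAt (fun s : ℝ => (c * (T - s) - S) ^ 2)
      (2 * (c * (T - t) - S) ^ 1 * (-c)) t := by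
    simpa using (hden t).fun_pow 2
  have h2 : HasDerivAt (fun s => Real.sqrt 2 * c / (c * (T - s) - S) ^ 2)
      (Real.sqrt 2 * c * (-(2 * (c * (T - t) - S) ^ 1 * (-c)) / ((c * (T - t) - S) ^ 2) ^ 2)) t := by
    simpa [div_eq_mul_inv, mul_comm] using
      (hp.inv (pow_ne_zero 2 h)).const_mul (Real.sqrt 2 * c)
  rw [h2.deriv]
  field_simp

lemma space_lemma (d : ℕ) (α : Fin d → ℝ) (C : ℝ) (j : Fin d)
    (x : EuclideanSpace ℝ (Fin d)) (h : C - ∑ k, Ac α k * x k ≠ 0) :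
    pdR j (pdR j fun y => Real.sqrt 2 / (C - ∑ k, Ac α k * y k)) x
      = 2 * Real.sqrt 2 * (Ac α j) ^ 2 / (C - ∑ k, Ac α k * x k) ^ 3 := by
  set L : EuclideanSpace ℝ (Fin d) →L[ℝ] ℝ :=
    ∑ k, Ac α k • (EuclideanSpace.proj k : EuclideanSpace ℝ (Fin d) →L[ℝ] ℝ) with hLdef
  have hL : ∀ y : EuclideanSpace ℝ (Fin d), L y = ∑ k, Ac α k * y k := by
    intro y
    simp [hLdef, ContinuousLinearMap.sum_apply]
  have hLj : L (EuclideanSpace.single j 1) = Ac α j := by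
    rw [hL]
    simp [EuclideanSpace.single_apply]
  have hden : ∀ y : EuclideanSpace ℝ (Fin d),
      HasFDerivAt (fun y : EuclideanSpace ℝ (Fin d) => C - L y) (-L) y := by
    intro y
    simpa using (hasFDerivAt_const C y).fun_sub L.hasFDerivAt
  have hLx : C - L x ≠ 0 := by rw [hL]; exact h
  have hder1 : ∀ y : EuclideanSpace ℝ (Fin d), C - L y ≠ 0 →
      pdR j (fun y => Real.sqrt 2 / (C - ∑ k, Ac α k * y k)) y
        = Real.sqrt 2 * Ac α j / (C - L y) ^ 2 := by
    intro y hy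
    have hphi : HasDerivAt (fun z : ℝ => Real.sqrt 2 / z)
        (Real.sqrt 2 * (-((C - L y) ^ 2)⁻¹)) (C - L y) := by
      simpa [div_eq_mul_inv, mul_comm] using (hasDerivAt_inv hy).const_mul (Real.sqrt 2)
    have h1 : HasFDerivAt (fun y : EuclideanSpace ℝ (Fin d) => Real.sqrt 2 / (C - L y))
        ((Real.sqrt 2 * (-((C - L y) ^ 2)⁻¹)) • (-L)) y :=
      hphi.comp_hasFDerivAt y (hden y)
    have hfun : (fun y : EuclideanSpace ℝ (Fin d) => Real.sqrt 2 / (C - ∑ k, Ac α k * y k))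
        = fun y => Real.sqrt 2 / (C - L y) := by
      funext z; rw [hL]
    rw [pdR, hfun, h1.fderiv]
    simp [hLj]
    field_simp
  have hcont : Continuous fun y : EuclideanSpace ℝ (Fin d) => C - L y :=
    continuous_const.sub L.continuous
  have hopen : ∀ᶠ y in nhds x, C - L y ≠ 0 := hcont.continuousAt.eventually_ne hLx
  have heq : (pdR j fun y => Real.sqrt 2 / (C - ∑ k, Ac α k * y k)) =ᶠ[nhds x]
      fun y => Real.sqrt 2 * Ac α j / (C - L y) ^ 2 :=
    hopen.mono fun y hy => hder1 y hy
  have hpsi : HasDerivAt (fun z : ℝ => Real.sqrt 2 * Ac α j / z ^ 2)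
      (Real.sqrt 2 * Ac α j * (-(2 * (C - L x) ^ 1) / ((C - L x) ^ 2) ^ 2)) (C - L x) := by
    simpa [div_eq_mul_inv, mul_comm] using
      ((hasDerivAt_pow 2 (C - L x)).inv (pow_ne_zero 2 hLx)).const_mul (Real.sqrt 2 * Ac α j)
  have h2 : HasFDerivAt (fun y : EuclideanSpace ℝ (Fin d) => Real.sqrt 2 * Ac α j / (C - L y) ^ 2)
      ((Real.sqrt 2 * Ac α j * (-(2 * (C - L x) ^ 1) / ((C - L x) ^ 2) ^ 2)) • (-L)) x :=
    by have := hpsi.comp_hasFDerivAt x (hden x); exact this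
  rw [pdR, heq.fderiv_eq, h2.fderiv]
  simp only [ContinuousLinearMap.coe_smul', Pi.smul_apply, ContinuousLinearMap.neg_apply, hLj,
    smul_eq_mul]
  rw [hL] at *
  field_simp

/-- `u_{T,α}` solves the focusing cubic wave equation `−∂_t²u + Δ_x u + u³ = 0` wherever its
denominator is nonzero. -/
theorem stmt_14 (d : ℕ) (T : ℝ) (α : Fin d → ℝ) (t : ℝ) (x : EuclideanSpace ℝ (Fin d))
    (h : A0 α * (T - t) - ∑ j, Ac α j * x j ≠ 0) :
    -(deriv (deriv fun s => uTA T α s x) t) +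
        (∑ j, pdR j (pdR j fun y => uTA T α t y) x) + (uTA T α t x) ^ 3 = 0 := by
  set D : ℝ := A0 α * (T - t) - ∑ j, Ac α j * x j with hD
  have htime : deriv (deriv fun s => uTA T α s x) t = 2 * Real.sqrt 2 * (A0 α) ^ 2 / D ^ 3 := by
    have heq : (fun s => uTA T α s x)
        = fun s => Real.sqrt 2 / (A0 α * (T - s) - ∑ j, Ac α j * x j) := by
      funext s; rfl
    rw [heq]
    exact time_lemma (A0 α) (∑ j, Ac α j * x j) T t h
  have hspace : ∀ j : Fin d, pdR j (pdR j fun y => uTA T α t y) x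
      = 2 * Real.sqrt 2 * (Ac α j) ^ 2 / D ^ 3 := by
    intro j
    have hfun : (fun y => uTA T α t y)
        = fun y : EuclideanSpace ℝ (Fin d) =>
          Real.sqrt 2 / (A0 α * (T - t) - ∑ k, Ac α k * y k) := by
      funext y; rfl
    rw [hfun]
    exact space_lemma d α (A0 α * (T - t)) j x h
  have hcube : (uTA T α t x) ^ 3 = 2 * Real.sqrt 2 / D ^ 3 := by
    rw [uTA, ← hD, div_pow]
    congr 1
    rw [show (Real.sqrt 2) ^ 3 = (Real.sqrt 2) ^ 2 * Real.sqrt 2 by ring,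
      Real.sq_sqrt (by norm_num : (0:ℝ) ≤ 2)]
  rw [htime, hcube]
  simp only [hspace]
  have hsumeq : ∑ j : Fin d, 2 * Real.sqrt 2 * Ac α j ^ 2 / D ^ 3
      = 2 * Real.sqrt 2 * (∑ j, Ac α j ^ 2) / D ^ 3 := by
    rw [← Finset.sum_div, ← Finset.mul_sum]
  have hkey := key_id d α
  have hsum : ∑ j, Ac α j ^ 2 = A0 α ^ 2 - 1 := by linarith
  rw [hsumeq, hsum]
  have hD3 : D ^ 3 ≠ 0 := pow_ne_zero 3 h
  field_simp
  ring

end
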